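/- arXiv:2110.04213 — 2 statements merged into one kernel-verified Lean document; each statement's English description precedes it below -/
import Mathlib

section
/- Let s₂ be an irrational real number, let a, b, c, d be integers with ad − bc ≠ 0, and let s₁ ∈ ℝ be such that 1, s₁, s₂ are linearly independent over ℚ. Then the map g : ℝ³/ℤ³ → ℝ³/ℤ³ defined by g(x₂, x₃, x₄) = (x₂ + s₂, x₃ + a s₁ + b x₂, x₄ + c s₁ + d x₂) is ergodic with respect to the Haar (Lebesgue) measure on ℝ³/ℤ³. -/
open MeasureTheory
open scoped ENNReal

noncomputable section ErgAux

local notation "𝕋" => AddCircle (1 : ℝ)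

namespace ErgAux

lemma haar_eq : (AddCircle.haarAddCircle : Measure 𝕋) = volume := by
  rw [AddCircle.volume_eq_smul_haarAddCircle]; simp

instance : IsProbabilityMeasure (volume : Measure 𝕋) := haar_eq ▸ inferInstance

lemma fourier_apply_add (n : ℤ) (x y : 𝕋) :
    fourier n (x + y) = fourier n x * fourier n y := by
  simp only [fourier_apply, smul_add, AddCircle.toCircle_add, Circle.coe_mul]

lemma fourier_zsmul (n b : ℤ) (x : 𝕋) : fourier n (b • x) = fourier (n * b) x := by
  simp only [fourier_apply, smul_smul]

lemma norm_fourier (n : ℤ) (x : 𝕋) : ‖fourier n x‖ = 1 := by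
  rw [fourier_apply]; exact Circle.norm_coe _

lemma integrable_of_bdd {X : Type*} [MeasurableSpace X] {μ : Measure X} [IsFiniteMeasure μ]
    {f : X → ℂ} {C : ℝ} (hm : AEStronglyMeasurable f μ) (hb : ∀ x, ‖f x‖ ≤ C) :
    Integrable f μ :=
  ⟨hm, HasFiniteIntegral.of_bounded (ae_of_all _ hb)⟩

lemma fourierCoeff_congr_ae {f g : 𝕋 → ℂ} (h : f =ᵐ[volume] g) (n : ℤ) :
    fourierCoeff f n = fourierCoeff g n := by
  simp only [fourierCoeff, haar_eq]
  exact integral_congr_ae (h.mono fun x hx => by dsimp only; rw [hx])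

/-- 1D: if all nonzero Fourier coefficients vanish, the function is a.e. constant. -/
lemma ae_const_of_fourierCoeff {f : 𝕋 → ℂ} (hf : MemLp f 2 (volume : Measure 𝕋))
    (h : ∀ n : ℤ, n ≠ 0 → fourierCoeff f n = 0) :
    f =ᵐ[volume] fun _ => fourierCoeff f 0 := by
  have hf' : MemLp f 2 AddCircle.haarAddCircle := haar_eq ▸ hf
  set F : Lp ℂ 2 AddCircle.haarAddCircle := hf'.toLp f with hF
  have hFf : (F : 𝕋 → ℂ) =ᵐ[volume] f := haar_eq ▸ hf'.coeFn_toLp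
  have hco : ∀ n, fourierCoeff (F : 𝕋 → ℂ) n = fourierCoeff f n :=
    fourierCoeff_congr_ae hFf
  have hs : HasSum (fun i => fourierCoeff f i • fourierLp (T := 1) 2 i) F := by
    simpa only [hco] using hasSum_fourier_series_L2 F
  have hone : HasSum (fun i => fourierCoeff f i • fourierLp (T := 1) 2 i)
      (fourierCoeff f 0 • fourierLp (T := 1) 2 0) :=
    hasSum_single 0 (fun i hi => by rw [h i hi, zero_smul])
  have hFeq : F = fourierCoeff f 0 • fourierLp (T := 1) 2 0 := hs.unique hone
  have h1 : (F : 𝕋 → ℂ) =ᵐ[volume] fun x => fourierCoeff f 0 • fourier 0 x := by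
    rw [hFeq]
    refine (haar_eq ▸ (Lp.coeFn_smul _ _) :
        ((fourierCoeff f 0 • fourierLp (T := 1) 2 0 : Lp ℂ 2 AddCircle.haarAddCircle) : 𝕋 → ℂ)
          =ᵐ[volume] fourierCoeff f 0 • (fourierLp (T := 1) 2 0 : 𝕋 → ℂ)).trans ?_
    exact (haar_eq ▸ coeFn_fourierLp (T := 1) 2 0 : (fourierLp (T := 1) 2 0 : 𝕋 → ℂ)
      =ᵐ[volume] fourier 0).mono fun x hx => congrArg (fun z => fourierCoeff f 0 • z) hx
  refine hFf.symm.trans (h1.trans ?_)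
  filter_upwards with x
  simp [fourier_zero]

/-- Decay: Fourier coefficients of an L² function cannot have the same norm along an
infinite (injective) sequence of frequencies, unless that norm is zero. -/
lemma norm_eq_zero_of_injective {f : 𝕋 → ℂ} (hf : MemLp f 2 (volume : Measure 𝕋)) {r : ℝ}
    (S : ℕ → ℤ) (hS : Function.Injective S) (hc : ∀ t, ‖fourierCoeff f (S t)‖ = r) : r = 0 := by
  have hf' : MemLp f 2 AddCircle.haarAddCircle := haar_eq ▸ hf
  set F : Lp ℂ 2 AddCircle.haarAddCircle := hf'.toLp f with hF
  have hco : ∀ n, fourierCoeff (F : 𝕋 → ℂ) n = fourierCoeff f n :=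
    fourierCoeff_congr_ae (haar_eq ▸ hf'.coeFn_toLp)
  have hmem : Memℓp (fun i => fourierBasis (T := 1).repr F i) 2 :=
    (fourierBasis (T := 1).repr F).property
  have hsum : Summable fun i : ℤ => ‖fourierBasis (T := 1).repr F i‖ ^ (2 : ℝ≥0∞).toReal :=
    hmem.summable (by norm_num)
  have hsum2 : Summable fun t : ℕ => ‖fourierBasis (T := 1).repr F (S t)‖ ^ (2 : ℝ≥0∞).toReal :=
    hsum.comp_injective hS
  have heq : (fun t : ℕ => ‖fourierBasis (T := 1).repr F (S t)‖ ^ (2 : ℝ≥0∞).toReal)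
      = fun _ : ℕ => r ^ (2 : ℝ≥0∞).toReal := by
    funext t
    rw [fourierBasis_repr, hco, hc]
  rw [heq] at hsum2
  have h0 : r ^ (2 : ℝ≥0∞).toReal = 0 := (summable_const_iff _).mp hsum2
  have hr : 0 ≤ r := (hc 0) ▸ norm_nonneg _
  have h2 : (2 : ℝ≥0∞).toReal = (2 : ℝ) := by norm_num
  rw [h2] at h0
  exact (Real.rpow_eq_zero hr (by norm_num)).mp h0


/-! ### Fubini layer -/

def coeff2 (f : 𝕋 × 𝕋 → ℂ) (l m : ℤ) : ℂ :=
  ∫ p : 𝕋 × 𝕋, fourier (-l) p.1 * fourier (-m) p.2 * f p ∂volume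

def coeff3 (f : 𝕋 × 𝕋 × 𝕋 → ℂ) (k l m : ℤ) : ℂ :=
  ∫ p : 𝕋 × 𝕋 × 𝕋, fourier (-k) p.1 * fourier (-l) p.2.1 * fourier (-m) p.2.2 * f p ∂volume

lemma fub2 {f : 𝕋 × 𝕋 → ℂ} (hm : Measurable f) (hb : ∀ p, ‖f p‖ ≤ 1) (l m : ℤ) :
    fourierCoeff (fun y => ∫ z, fourier (-m) z * f (y, z) ∂volume) l = coeff2 f l m := by
  have hmeas : Measurable fun p : 𝕋 × 𝕋 => fourier (-l) p.1 * (fourier (-m) p.2 * f p) :=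
    (((fourier (-l)).continuous.measurable.comp measurable_fst).mul
      (((fourier (-m)).continuous.measurable.comp measurable_snd).mul hm))
  have hint : Integrable (fun p : 𝕋 × 𝕋 => fourier (-l) p.1 * (fourier (-m) p.2 * f p))
      ((volume : Measure 𝕋).prod volume) := by
    rw [← Measure.volume_eq_prod]
    refine integrable_of_bdd (C := 1) hmeas.aestronglyMeasurable fun p => ?_
    rw [norm_mul, norm_mul, norm_fourier, norm_fourier, one_mul, one_mul]
    exact hb p
  have h1 := integral_prod _ hint
  unfold coeff2
  rw [Measure.volume_eq_prod]
  rw [show (fun p : 𝕋 × 𝕋 => fourier (-l) p.1 * fourier (-m) p.2 * f p)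
      = fun p : 𝕋 × 𝕋 => fourier (-l) p.1 * (fourier (-m) p.2 * f p) from
    funext fun p => by ring, h1]
  simp only [fourierCoeff, haar_eq, smul_eq_mul]
  refine integral_congr_ae (ae_of_all _ fun y => ?_)
  exact (integral_const_mul _ _).symm

lemma fub3 {f : 𝕋 × 𝕋 × 𝕋 → ℂ} (hm : Measurable f) (hb : ∀ p, ‖f p‖ ≤ 1) (k l m : ℤ) :
    fourierCoeff (fun x => coeff2 (fun w => f (x, w)) l m) k = coeff3 f k l m := by
  have hmeas : Measurable fun p : 𝕋 × 𝕋 × 𝕋 =>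
      fourier (-k) p.1 * (fourier (-l) p.2.1 * fourier (-m) p.2.2 * f p) :=
    ((fourier (-k)).continuous.measurable.comp measurable_fst).mul
      ((((fourier (-l)).continuous.measurable.comp (measurable_fst.comp measurable_snd)).mul
        ((fourier (-m)).continuous.measurable.comp (measurable_snd.comp measurable_snd))).mul hm)
  have hint : Integrable (fun p : 𝕋 × 𝕋 × 𝕋 =>
      fourier (-k) p.1 * (fourier (-l) p.2.1 * fourier (-m) p.2.2 * f p))
      ((volume : Measure 𝕋).prod (volume : Measure (𝕋 × 𝕋))) := by
    rw [← Measure.volume_eq_prod]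
    refine integrable_of_bdd (C := 1) hmeas.aestronglyMeasurable fun p => ?_
    rw [norm_mul, norm_mul, norm_mul, norm_fourier, norm_fourier, norm_fourier,
      one_mul, one_mul, one_mul]
    exact hb p
  have h1 := integral_prod _ hint
  unfold coeff3
  rw [Measure.volume_eq_prod]
  rw [show (fun p : 𝕋 × 𝕋 × 𝕋 => fourier (-k) p.1 * fourier (-l) p.2.1 * fourier (-m) p.2.2 * f p)
      = fun p : 𝕋 × 𝕋 × 𝕋 => fourier (-k) p.1 * (fourier (-l) p.2.1 * fourier (-m) p.2.2 * f p)
      from funext fun p => by ring, h1]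
  simp only [fourierCoeff, haar_eq, smul_eq_mul]
  refine integral_congr_ae (ae_of_all _ fun x => ?_)
  simp only [coeff2]
  exact (integral_const_mul _ _).symm

/-! ### 2D and 3D uniqueness -/

lemma twoD {f : 𝕋 × 𝕋 → ℂ} (hm : Measurable f) (hb : ∀ p, ‖f p‖ ≤ 1)
    (h : ∀ l m : ℤ, ¬(l = 0 ∧ m = 0) → coeff2 f l m = 0) :
    f =ᵐ[volume] fun _ => coeff2 f 0 0 := by
  set H : ℤ → 𝕋 → ℂ := fun m y => ∫ z, fourier (-m) z * f (y, z) ∂volume with hH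
  have hHm : ∀ m, Measurable (H m) := by
    intro m
    have hsm : StronglyMeasurable fun p : 𝕋 × 𝕋 => fourier (-m) p.2 * f p :=
      (((fourier (-m)).continuous.measurable.comp measurable_snd).mul hm).stronglyMeasurable
    exact hsm.integral_prod_right'.measurable
  have hHb : ∀ m y, ‖H m y‖ ≤ 1 := by
    intro m y
    refine le_trans (norm_integral_le_of_norm_le_const (C := 1) (ae_of_all _ fun z => ?_)) (by simp)
    rw [norm_mul, norm_fourier, one_mul]; exact hb _
  have hHlp : ∀ m, MemLp (H m) 2 (volume : Measure 𝕋) := fun m =>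
    MemLp.of_bound (hHm m).aestronglyMeasurable 1 (ae_of_all _ (hHb m))
  have hcoeff : ∀ l m, fourierCoeff (H m) l = coeff2 f l m := fun l m => fub2 hm hb l m
  have hzeroH : ∀ m : ℤ, m ≠ 0 → H m =ᵐ[volume] fun _ => (0 : ℂ) := by
    intro m hm0
    have h0 : fourierCoeff (H m) 0 = 0 := by rw [hcoeff]; exact h 0 m fun c => hm0 c.2
    have := ae_const_of_fourierCoeff (hHlp m) fun n _ => by
      rw [hcoeff]; exact h n m fun c => hm0 c.2
    rw [h0] at this; exact this
  have hconst : H 0 =ᵐ[volume] fun _ => coeff2 f 0 0 := by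
    have := ae_const_of_fourierCoeff (hHlp 0) fun n hn => by
      rw [hcoeff]; exact h n 0 fun c => hn c.1
    rw [hcoeff] at this; exact this
  have hsec : ∀ᵐ y ∂(volume : Measure 𝕋),
      (∀ m : ℤ, m ≠ 0 → H m y = 0) ∧ H 0 y = coeff2 f 0 0 := by
    refine (ae_all_iff.mpr ?_).and hconst
    intro m
    by_cases hm0 : m = 0
    · exact ae_of_all _ fun y h' => (h' hm0).elim
    · exact (hzeroH m hm0).mono fun y hy _ => hy
  have key : ∀ᵐ y ∂(volume : Measure 𝕋), ∀ᵐ z ∂(volume : Measure 𝕋),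
      f (y, z) = coeff2 f 0 0 := by
    filter_upwards [hsec] with y hy
    have hmem : MemLp (fun z => f (y, z)) 2 (volume : Measure 𝕋) :=
      MemLp.of_bound (hm.comp measurable_prodMk_left).aestronglyMeasurable 1
        (ae_of_all _ fun z => hb _)
    have hcsec : ∀ n : ℤ, fourierCoeff (fun z => f (y, z)) n = H n y := fun n => by
      simp only [hH, fourierCoeff, haar_eq, smul_eq_mul]
    have hfc : ∀ n : ℤ, n ≠ 0 → fourierCoeff (fun z => f (y, z)) n = 0 := fun n hn => by
      rw [hcsec]; exact hy.1 n hn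
    have := ae_const_of_fourierCoeff hmem hfc
    rw [hcsec 0, hy.2] at this
    exact this
  have hsm : MeasurableSet {p : 𝕋 × 𝕋 | ¬f p = coeff2 f 0 0} :=
    (hm (measurableSet_singleton _)).compl
  show ∀ᵐ p ∂(volume : Measure (𝕋 × 𝕋)), f p = coeff2 f 0 0
  rw [ae_iff, Measure.volume_eq_prod, Measure.measure_prod_null hsm]
  filter_upwards [key] with y hy
  have : (Prod.mk y ⁻¹' {p : 𝕋 × 𝕋 | ¬f p = coeff2 f 0 0}) = {z | ¬f (y, z) = coeff2 f 0 0} := rfl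
  simp only [Pi.zero_apply, this]
  exact ae_iff.mp hy

lemma threeD {f : 𝕋 × 𝕋 × 𝕋 → ℂ} (hm : Measurable f) (hb : ∀ p, ‖f p‖ ≤ 1)
    (h : ∀ k l m : ℤ, ¬(k = 0 ∧ l = 0 ∧ m = 0) → coeff3 f k l m = 0) :
    ∃ C : ℂ, f =ᵐ[volume] fun _ => C := by
  set G : ℤ → ℤ → 𝕋 → ℂ := fun l m x => coeff2 (fun w => f (x, w)) l m with hG
  have hGm : ∀ l m, Measurable (G l m) := by
    intro l m
    have hsm : StronglyMeasurable fun p : 𝕋 × (𝕋 × 𝕋) =>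
        fourier (-l) p.2.1 * fourier (-m) p.2.2 * f p :=
      ((((fourier (-l)).continuous.measurable.comp (measurable_fst.comp measurable_snd)).mul
        ((fourier (-m)).continuous.measurable.comp (measurable_snd.comp measurable_snd))).mul
          hm).stronglyMeasurable
    exact hsm.integral_prod_right'.measurable
  have hGb : ∀ l m x, ‖G l m x‖ ≤ 1 := by
    intro l m x
    refine le_trans (norm_integral_le_of_norm_le_const (C := 1) (ae_of_all _ fun w => ?_)) (by simp)
    rw [norm_mul, norm_mul, norm_fourier, norm_fourier, one_mul, one_mul]; exact hb _
  have hGlp : ∀ l m, MemLp (G l m) 2 (volume : Measure 𝕋) := fun l m =>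
    MemLp.of_bound (hGm l m).aestronglyMeasurable 1 (ae_of_all _ (hGb l m))
  have hcoeff : ∀ k l m, fourierCoeff (G l m) k = coeff3 f k l m := fun k l m => fub3 hm hb k l m
  have hzeroG : ∀ l m : ℤ, ¬(l = 0 ∧ m = 0) → G l m =ᵐ[volume] fun _ => (0 : ℂ) := by
    intro l m hlm
    have h0 : fourierCoeff (G l m) 0 = 0 := by
      rw [hcoeff]; exact h 0 l m fun c => hlm ⟨c.2.1, c.2.2⟩
    have := ae_const_of_fourierCoeff (hGlp l m) fun n _ => by
      rw [hcoeff]; exact h n l m fun c => hlm ⟨c.2.1, c.2.2⟩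
    rw [h0] at this; exact this
  have hconst : G 0 0 =ᵐ[volume] fun _ => coeff3 f 0 0 0 := by
    have := ae_const_of_fourierCoeff (hGlp 0 0) fun n hn => by
      rw [hcoeff]; exact h n 0 0 fun c => hn c.1
    rw [hcoeff] at this; exact this
  have hsec : ∀ᵐ x ∂(volume : Measure 𝕋),
      (∀ q : ℤ × ℤ, ¬(q.1 = 0 ∧ q.2 = 0) → G q.1 q.2 x = 0) ∧ G 0 0 x = coeff3 f 0 0 0 := by
    refine (ae_all_iff.mpr ?_).and hconst
    intro q
    by_cases hq : q.1 = 0 ∧ q.2 = 0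
    · exact ae_of_all _ fun x h' => (h' hq).elim
    · exact (hzeroG q.1 q.2 hq).mono fun x hx _ => hx
  have key : ∀ᵐ x ∂(volume : Measure 𝕋), ∀ᵐ w ∂(volume : Measure (𝕋 × 𝕋)),
      f (x, w) = coeff3 f 0 0 0 := by
    filter_upwards [hsec] with x hx
    have := twoD (f := fun w => f (x, w)) (hm.comp measurable_prodMk_left)
      (fun w => hb _) (fun l m hlm => hx.1 (l, m) hlm)
    rw [show coeff2 (fun w => f (x, w)) 0 0 = G 0 0 x from rfl, hx.2] at this
    exact this
  refine ⟨coeff3 f 0 0 0, ?_⟩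
  have hsm : MeasurableSet {p : 𝕋 × 𝕋 × 𝕋 | ¬f p = coeff3 f 0 0 0} :=
    (hm (measurableSet_singleton _)).compl
  show ∀ᵐ p ∂(volume : Measure (𝕋 × 𝕋 × 𝕋)), f p = coeff3 f 0 0 0
  rw [ae_iff, Measure.volume_eq_prod, Measure.measure_prod_null hsm]
  filter_upwards [key] with x hx
  have : (Prod.mk x ⁻¹' {p : 𝕋 × 𝕋 × 𝕋 | ¬f p = coeff3 f 0 0 0})
      = {w | ¬f (x, w) = coeff3 f 0 0 0} := rfl
  simp only [Pi.zero_apply, this]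
  exact ae_iff.mp hx


/-! ### Arithmetic helpers -/

lemma exp_two_pi_ne_one {θ : ℝ} (hθ : ∀ n : ℤ, θ ≠ n) :
    Complex.exp (2 * Real.pi * Complex.I * θ) ≠ 1 := by
  intro hc
  obtain ⟨n, hn⟩ := Complex.exp_eq_one_iff.mp hc
  apply hθ n
  have hpi : (2 * (Real.pi : ℂ) * Complex.I) ≠ 0 := by
    simp [Real.pi_ne_zero, Complex.I_ne_zero]
  have h2 : 2 * (Real.pi : ℂ) * Complex.I * θ = 2 * (Real.pi : ℂ) * Complex.I * n := by
    rw [hn]; ring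
  have h3 : (θ : ℂ) = (n : ℂ) := mul_left_cancel₀ hpi h2
  exact_mod_cast h3

lemma theta_not_int {s₁ s₂ : ℝ} (hind : LinearIndependent ℚ ![(1 : ℝ), s₁, s₂])
    {k q : ℤ} (hkq : ¬(k = 0 ∧ q = 0)) (n : ℤ) :
    -(k : ℝ) * s₂ + -(q : ℝ) * s₁ ≠ (n : ℝ) := by
  intro hEq
  have h := Fintype.linearIndependent_iff.mp hind ![(n : ℚ), (q : ℚ), (k : ℚ)] ?_
  · refine hkq ⟨?_, ?_⟩
    · have := h 2; simp at this; exact_mod_cast this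
    · have := h 1; simp at this; exact_mod_cast this
  · show ((n : ℚ) • (1 : ℝ) + ((q : ℚ) • s₁ + ((k : ℚ) • s₂ + 0))) = 0
    simp only [Rat.smul_def, Rat.cast_intCast, add_zero]
    push_cast
    linarith

lemma det_aux {a b c d l m : ℤ} (hdet : a * d - b * c ≠ 0) (h1 : l * b + m * d = 0)
    (h2 : l * a + m * c = 0) : l = 0 ∧ m = 0 := by
  have hl : l * (a * d - b * c) = d * (l * a + m * c) - c * (l * b + m * d) := by ring
  have hm : m * (a * d - b * c) = a * (l * b + m * d) - b * (l * a + m * c) := by ring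
  rw [h1, h2] at hl hm
  simp only [mul_zero, sub_zero, zero_sub, sub_self] at hl hm
  constructor
  · rcases mul_eq_zero.mp hl with h | h
    · exact h
    · exact (hdet h).elim
  · rcases mul_eq_zero.mp hm with h | h
    · exact h
    · exact (hdet h).elim

end ErgAux

open ErgAux Filter

/-- if `s₂` is irrational, `a b c d` are integers with `ad − bc ≠ 0`, and
`1, s₁, s₂` are linearly independent over `ℚ`, then the map
`g(x₂,x₃,x₄) = (x₂+s₂, x₃+as₁+bx₂, x₄+cs₁+dx₂)` on `ℝ³/ℤ³` is ergodic for Haar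
(Lebesgue) measure. -/
theorem ergodic_skew_translation_T3
    (s₁ s₂ : ℝ) (hs₂ : Irrational s₂)
    (hind : LinearIndependent ℚ ![(1 : ℝ), s₁, s₂])
    (a b c d : ℤ) (hdet : a * d - b * c ≠ 0) :
    Ergodic
      (fun p : AddCircle (1 : ℝ) × AddCircle (1 : ℝ) × AddCircle (1 : ℝ) =>
        (p.1 + (s₂ : AddCircle (1 : ℝ)),
         p.2.1 + (((a : ℝ) * s₁ : ℝ) : AddCircle (1 : ℝ)) + b • p.1,
         p.2.2 + (((c : ℝ) * s₁ : ℝ) : AddCircle (1 : ℝ)) + d • p.1))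
      volume := by
  classical
  set σ₂ : 𝕋 := ((s₂ : ℝ) : 𝕋) with hσ₂
  set τa : 𝕋 := (((a : ℝ) * s₁ : ℝ) : 𝕋) with hτa
  set τc : 𝕋 := (((c : ℝ) * s₁ : ℝ) : 𝕋) with hτc
  set g : 𝕋 × 𝕋 × 𝕋 → 𝕋 × 𝕋 × 𝕋 :=
    fun p => (p.1 + σ₂, p.2.1 + τa + b • p.1, p.2.2 + τc + d • p.1) with hg
  have hgp : ∀ p : 𝕋 × 𝕋 × 𝕋,
      g p = (p.1 + σ₂, p.2.1 + τa + b • p.1, p.2.2 + τc + d • p.1) := fun p => by rw [hg]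
  -- measure preserving
  have hgm : Measurable (Function.uncurry fun (x : 𝕋) (w : 𝕋 × 𝕋) =>
      ((w.1 + τa + b • x, w.2 + τc + d • x) : 𝕋 × 𝕋)) := by
    apply Continuous.measurable
    apply Continuous.prodMk
    · exact ((continuous_fst.comp continuous_snd).add continuous_const).add
        ((continuous_zsmul b).comp continuous_fst)
    · exact ((continuous_snd.comp continuous_snd).add continuous_const).add
        ((continuous_zsmul d).comp continuous_fst)
  have hmp : MeasurePreserving g volume volume := by
    have hfib : ∀ x : 𝕋, Measure.map
        ((fun (x : 𝕋) (w : 𝕋 × 𝕋) => ((w.1 + τa + b • x, w.2 + τc + d • x) : 𝕋 × 𝕋)) x)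
        ((volume : Measure 𝕋).prod (volume : Measure 𝕋))
        = (volume : Measure 𝕋).prod (volume : Measure 𝕋) := by
      intro x
      dsimp only
      have h2 : (fun w : 𝕋 × 𝕋 => ((w.1 + τa + b • x, w.2 + τc + d • x) : 𝕋 × 𝕋))
          = Prod.map (fun y : 𝕋 => y + (τa + b • x)) (fun z : 𝕋 => z + (τc + d • x)) := by
        funext w; simp [Prod.map, add_assoc]
      rw [h2]
      exact ((measurePreserving_add_right (volume : Measure 𝕋) (τa + b • x)).prod
        (measurePreserving_add_right (volume : Measure 𝕋) (τc + d • x))).map_eq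
    exact (measurePreserving_add_right (volume : Measure 𝕋) σ₂).skew_product hgm
      (ae_of_all _ hfib)
  refine ⟨hmp, ⟨fun s hs hinv => ?_⟩⟩
  -- the indicator function
  set f : 𝕋 × 𝕋 × 𝕋 → ℂ := s.indicator (fun _ => 1) with hfdef
  have hfm : Measurable f := measurable_const.indicator hs
  have hfb : ∀ p, ‖f p‖ ≤ 1 := fun p => by
    by_cases hp : p ∈ s
    · rw [hfdef, Set.indicator_of_mem hp]; simp
    · rw [hfdef, Set.indicator_of_notMem hp]; simp
  have hfg : ∀ p, f (g p) = f p := fun p => by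
    have hmem : g p ∈ s ↔ p ∈ s := by
      conv_rhs => rw [← hinv]
      exact Iff.rfl
    by_cases hp : p ∈ s
    · rw [hfdef, Set.indicator_of_mem (hmem.mpr hp), Set.indicator_of_mem hp]
    · rw [hfdef, Set.indicator_of_notMem (fun hx => hp (hmem.mp hx)),
        Set.indicator_of_notMem hp]
  -- invariance relation for Fourier coefficients
  have hrel : ∀ k l m : ℤ, coeff3 f k l m
      = fourier (-k) σ₂ * fourier (-l) τa * fourier (-m) τc
        * coeff3 f (k + l * b + m * d) l m := by
    intro k l m
    have hmeas : Measurable fun p : 𝕋 × 𝕋 × 𝕋 =>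
        fourier (-k) p.1 * fourier (-l) p.2.1 * fourier (-m) p.2.2 * f p :=
      ((((fourier (-k)).continuous.measurable.comp measurable_fst).mul
        ((fourier (-l)).continuous.measurable.comp (measurable_fst.comp measurable_snd))).mul
        ((fourier (-m)).continuous.measurable.comp (measurable_snd.comp measurable_snd))).mul hfm
    have hstep : coeff3 f k l m = ∫ p, (fun p : 𝕋 × 𝕋 × 𝕋 =>
        fourier (-k) p.1 * fourier (-l) p.2.1 * fourier (-m) p.2.2 * f p) (g p) ∂volume := by
      have h1 := integral_map (φ := g) hmp.measurable.aemeasurable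
        (f := fun p : 𝕋 × 𝕋 × 𝕋 =>
          fourier (-k) p.1 * fourier (-l) p.2.1 * fourier (-m) p.2.2 * f p)
        (by rw [hmp.map_eq]; exact hmeas.aestronglyMeasurable)
      rw [hmp.map_eq] at h1
      simp only [coeff3]
      exact h1
    have hpt : ∀ p : 𝕋 × 𝕋 × 𝕋, (fun p : 𝕋 × 𝕋 × 𝕋 =>
        fourier (-k) p.1 * fourier (-l) p.2.1 * fourier (-m) p.2.2 * f p) (g p)
        = fourier (-k) σ₂ * fourier (-l) τa * fourier (-m) τc
          * (fourier (-(k + l * b + m * d)) p.1 * fourier (-l) p.2.1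
            * fourier (-m) p.2.2 * f p) := by
      intro p
      have he : fourier (-(k + l * b + m * d)) p.1
          = fourier (-k) p.1 * (fourier (-l * b) p.1 * fourier (-m * d) p.1) := by
        rw [← fourier_add, ← fourier_add]
        congr 1
        ring
      show fourier (-k) ((g p).1) * fourier (-l) ((g p).2.1) * fourier (-m) ((g p).2.2) * f (g p)
        = _
      rw [hfg p, hgp p]
      dsimp only
      rw [fourier_apply_add, fourier_apply_add, fourier_apply_add, fourier_apply_add,
        fourier_apply_add, fourier_zsmul, fourier_zsmul, he]
      ring
    rw [hstep, integral_congr_ae (ae_of_all _ hpt)]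
    unfold coeff3
    exact integral_const_mul _ _
  -- the phase is an explicit exponential
  have hlam : ∀ k l m : ℤ, fourier (-k) σ₂ * fourier (-l) τa * fourier (-m) τc
      = Complex.exp (2 * Real.pi * Complex.I *
          ((-(k : ℝ) * s₂ + -((l * a + m * c : ℤ) : ℝ) * s₁ : ℝ) : ℂ)) := by
    intro k l m
    rw [hσ₂, hτa, hτc, fourier_coe_apply, fourier_coe_apply, fourier_coe_apply,
      ← Complex.exp_add, ← Complex.exp_add]
    congr 1
    push_cast
    ring
  -- vanishing of all nontrivial coefficients
  have hzero : ∀ k l m : ℤ, ¬(k = 0 ∧ l = 0 ∧ m = 0) → coeff3 f k l m = 0 := by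
    intro k l m hne
    by_cases he : l * b + m * d = 0
    · have hrel' : coeff3 f k l m
          = fourier (-k) σ₂ * fourier (-l) τa * fourier (-m) τc * coeff3 f k l m := by
        have h1 := hrel k l m
        rwa [show k + l * b + m * d = k from by rw [add_assoc, he, add_zero]] at h1
      have hq : ¬(k = 0 ∧ l * a + m * c = 0) := by
        rintro ⟨hk, hq0⟩
        by_cases hlm : l = 0 ∧ m = 0
        · exact hne ⟨hk, hlm.1, hlm.2⟩
        · exact hlm (det_aux hdet he hq0)
      have hΛ : fourier (-k) σ₂ * fourier (-l) τa * fourier (-m) τc ≠ 1 := by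
        rw [hlam k l m]
        exact exp_two_pi_ne_one (fun n => theta_not_int hind hq n)
      have hz : (1 - fourier (-k) σ₂ * fourier (-l) τa * fourier (-m) τc)
          * coeff3 f k l m = 0 := by
        rw [sub_mul, one_mul]
        conv_lhs => rw [← hrel']
        rw [sub_self]
      rcases mul_eq_zero.mp hz with h1 | h1
      · exact absurd (by linear_combination -h1) hΛ
      · exact h1
    · -- infinite orbit: norms are constant along k ↦ k + e
      set e : ℤ := l * b + m * d with hedef
      have hnr : ∀ j : ℤ, ‖coeff3 f j l m‖ = ‖coeff3 f (j + e) l m‖ := by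
        intro j
        rw [hrel j l m, show j + l * b + m * d = j + e from by rw [add_assoc, ← hedef]]
        rw [norm_mul, norm_mul, norm_mul, norm_fourier, norm_fourier, norm_fourier]
        ring
      have hnorms : ∀ t : ℕ, ‖coeff3 f (k + e * t) l m‖ = ‖coeff3 f k l m‖ := by
        intro t
        induction t with
        | zero => simp
        | succ n ih =>
          have h1 : k + e * ((n : ℤ) + 1) = (k + e * n) + e := by ring
          push_cast
          rw [h1, ← hnr (k + e * n)]
          push_cast at ih
          exact ih
      -- the function of the first variable
      have hGm : Measurable fun x => coeff2 (fun w => f (x, w)) l m := by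
        have hsm : StronglyMeasurable fun p : 𝕋 × (𝕋 × 𝕋) =>
            fourier (-l) p.2.1 * fourier (-m) p.2.2 * f p :=
          ((((fourier (-l)).continuous.measurable.comp (measurable_fst.comp measurable_snd)).mul
            ((fourier (-m)).continuous.measurable.comp (measurable_snd.comp measurable_snd))).mul
              hfm).stronglyMeasurable
        exact hsm.integral_prod_right'.measurable
      have hGb : ∀ x, ‖coeff2 (fun w => f (x, w)) l m‖ ≤ 1 := by
        intro x
        refine le_trans (norm_integral_le_of_norm_le_const (C := 1)
          (ae_of_all _ fun w => ?_)) (by simp)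
        rw [norm_mul, norm_mul, norm_fourier, norm_fourier, one_mul, one_mul]
        exact hfb _
      have hGlp : MemLp (fun x => coeff2 (fun w => f (x, w)) l m) 2 (volume : Measure 𝕋) :=
        MemLp.of_bound hGm.aestronglyMeasurable 1 (ae_of_all _ hGb)
      have hinj : Function.Injective fun t : ℕ => k + e * (t : ℤ) := by
        intro t u htu
        have h1 : e * (t : ℤ) = e * (u : ℤ) := by
          have := htu
          dsimp at this
          omega
        have h2 : (t : ℤ) = (u : ℤ) := mul_left_cancel₀ he h1
        exact_mod_cast h2
      have hr : ‖coeff3 f k l m‖ = 0 := by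
        refine norm_eq_zero_of_injective hGlp (fun t : ℕ => k + e * (t : ℤ)) hinj fun t => ?_
        rw [fub3 hfm hfb]
        exact hnorms t
      exact norm_eq_zero.mp hr
  obtain ⟨C, hC⟩ := threeD hfm hfb hzero
  by_cases hC1 : C = 1
  · refine eventuallyConst_set.2 (Or.inl ?_)
    filter_upwards [hC] with p hp
    by_contra hps
    rw [hfdef] at hp
    rw [Set.indicator_of_notMem hps] at hp
    rw [hC1] at hp
    exact zero_ne_one hp
  · refine eventuallyConst_set.2 (Or.inr ?_)
    filter_upwards [hC] with p hp
    intro hps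
    rw [hfdef, Set.indicator_of_mem hps] at hp
    exact hC1 hp.symm
end ErgAux
end

section
/- Let E = ℂ/Λ with Λ = ℤ ⊕ ℤτ, τ = 1/2 + it for some t > 0, and let s be a real structure (anti-holomorphic involution) on the abelian surface A = E × E = ℂ²/Λ² fixing the origin, whose fixed-point set contains the real 2-torus Σ_A spanned by the vectors (τ, 0) and (0, τ) modulo Λ². Then the linear part of s is B∘σ_A where σ_A(x,y) = (x̄, ȳ) and B is the homothety of ratio τ/τ̄; consequently multiplication by τ/τ̄ preserves the lattice ℤ ⊕ ℤτ, and this forces t ∈ {√3/2, 1/2, √3/6}. -/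
/-- The lattice `ℤ ⊕ ℤτ ⊂ ℂ`. -/
noncomputable def latticeZt (τ : ℂ) : AddSubgroup ℂ :=
  AddSubgroup.closure {1, τ}

lemma mem_latticeZt_iff {τ z : ℂ} : z ∈ latticeZt τ ↔ ∃ a b : ℤ, z = a + b * τ := by
  constructor
  · intro hz
    induction hz using AddSubgroup.closure_induction with
    | mem x hx =>
      rcases hx with h | h
      · exact ⟨1, 0, by simp [h]⟩
      · simp only [Set.mem_singleton_iff] at h; exact ⟨0, 1, by simp [h]⟩
    | zero => exact ⟨0, 0, by simp⟩
    | add x y hx hy ihx ihy =>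
      obtain ⟨a, b, rfl⟩ := ihx
      obtain ⟨c, d, rfl⟩ := ihy
      exact ⟨a + c, b + d, by push_cast; ring⟩
    | neg x hx ihx =>
      obtain ⟨a, b, rfl⟩ := ihx
      exact ⟨-a, -b, by push_cast; ring⟩
  · rintro ⟨a, b, rfl⟩
    have h1 : (1 : ℂ) ∈ latticeZt τ := AddSubgroup.subset_closure (by simp)
    have hτ : τ ∈ latticeZt τ := AddSubgroup.subset_closure (by simp)
    have ha := AddSubgroup.zsmul_mem _ h1 a
    have hb := AddSubgroup.zsmul_mem _ hτ b
    simpa [zsmul_eq_mul] using AddSubgroup.add_mem _ ha hb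

lemma lattice_line_zero (t : ℝ) (ht : 0 < t) (c : ℂ)
    (h : ∀ u : ℝ, (u : ℂ) * c ∈ latticeZt ((1 / 2 : ℂ) + (t : ℂ) * Complex.I)) :
    c = 0 := by
  by_contra hc
  have hcn : 0 < ‖c‖ := by simpa using hc
  set δ : ℝ := min t 1 with hδdef
  have hδ : 0 < δ := lt_min ht one_pos
  set u : ℝ := δ / (2 * ‖c‖) with hu
  have hupos : 0 < u := div_pos hδ (by positivity)
  obtain ⟨a, b, hab⟩ := mem_latticeZt_iff.mp (h u)
  have habs : ‖(u : ℂ) * c‖ = δ / 2 := by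
    rw [norm_mul, Complex.norm_real, Real.norm_eq_abs, abs_of_pos hupos, hu]
    field_simp
  have him : ((u : ℂ) * c).im = b * t := by
    rw [hab]; simp [Complex.add_im, Complex.mul_im]
  have hre : ((u : ℂ) * c).re = a + b * (1 / 2) := by
    rw [hab]; simp [Complex.add_re, Complex.mul_re]
  have him_le : |((u : ℂ) * c).im| ≤ δ / 2 := habs ▸ Complex.abs_im_le_norm _
  have hre_le : |((u : ℂ) * c).re| ≤ δ / 2 := habs ▸ Complex.abs_re_le_norm _
  have hb0 : b = 0 := by
    by_contra hb
    have h1 : (1 : ℝ) ≤ |(b : ℝ)| := by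
      rw [← Int.cast_abs]; exact_mod_cast Int.one_le_abs hb
    have : t ≤ |(b : ℝ) * t| := by
      rw [abs_mul, abs_of_pos ht]
      nlinarith
    rw [him] at him_le
    have : δ ≤ t := min_le_left _ _
    linarith [him_le, ‹t ≤ |(b:ℝ)*t|›]
  have ha0 : a = 0 := by
    by_contra ha
    have h1 : (1 : ℝ) ≤ |(a : ℝ)| := by
      rw [← Int.cast_abs]; exact_mod_cast Int.one_le_abs ha
    rw [hre, hb0] at hre_le
    simp at hre_le
    have : δ ≤ 1 := min_le_right _ _
    linarith
  rw [ha0, hb0] at hab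
  simp at hab
  rcases hab with h0 | h0
  · exact absurd h0 (ne_of_gt hupos)
  · exact hc h0

lemma t_of_b (t : ℝ) (ht : 0 < t) (b : ℤ) (hbeq : (b : ℝ) * (1 / 4 + t ^ 2) = 1) :
    t = Real.sqrt 3 / 2 ∨ t = 1 / 2 ∨ t = Real.sqrt 3 / 6 := by
  have hbpos : 0 < b := by
    by_contra hb
    push_neg at hb
    have hb' : (b : ℝ) ≤ 0 := by exact_mod_cast hb
    nlinarith
  have hble : b ≤ 3 := by
    by_contra hb
    push_neg at hb
    have hb' : (4 : ℝ) ≤ (b : ℝ) := by exact_mod_cast hb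
    nlinarith
  have h3 : Real.sqrt 3 ^ 2 = 3 := Real.sq_sqrt (by norm_num)
  have h3n : 0 ≤ Real.sqrt 3 := Real.sqrt_nonneg 3
  interval_cases b <;> norm_num at hbeq
  · left
    have hfac : (t - Real.sqrt 3 / 2) * (t + Real.sqrt 3 / 2) = 0 := by nlinarith
    rcases mul_eq_zero.mp hfac with h | h
    · linarith
    · nlinarith
  · right; left
    have hfac : (t - 1 / 2) * (t + 1 / 2) = 0 := by nlinarith
    rcases mul_eq_zero.mp hfac with h | h
    · linarith
    · nlinarith
  · right; right
    have hfac : (t - Real.sqrt 3 / 6) * (t + Real.sqrt 3 / 6) = 0 := by nlinarith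
    rcases mul_eq_zero.mp hfac with h | h
    · linarith
    · nlinarith

/-- let `τ = 1/2 + it`, `t > 0`, `Λ = ℤ ⊕ ℤτ`, and let
`s = B ∘ σ_A` be an anti-holomorphic involution of `A = ℂ²/Λ²` fixing the origin
(here `σ_A(x,y) = (x̄,ȳ)` and `B` is a `ℂ`-linear lift preserving the lattice,
inducing an involution of `A`), whose fixed-point set contains the real torus
`Σ_A = {(uτ, vτ) : u,v ∈ ℝ} mod Λ²`.  Then `B` is the homothety of ratio `τ/τ̄`,
multiplication by `τ/τ̄` preserves `ℤ ⊕ ℤτ`, and `t ∈ {√3/2, 1/2, √3/6}`. -/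
theorem real_structure_fixing_sigmaA_forces_special_t
    (t : ℝ) (ht : 0 < t) (B : (ℂ × ℂ) →ₗ[ℂ] ℂ × ℂ) :
    let τ : ℂ := (1 / 2 : ℂ) + (t : ℂ) * Complex.I
    let L : AddSubgroup (ℂ × ℂ) := (latticeZt τ).prod (latticeZt τ)
    let S : ℂ × ℂ → ℂ × ℂ := fun z => B ((starRingEnd ℂ) z.1, (starRingEnd ℂ) z.2)
    (∀ z ∈ L, S z ∈ L) →
    (∀ z : ℂ × ℂ, S (S z) - z ∈ L) →
    (∀ u v : ℝ, S ((u : ℂ) * τ, (v : ℂ) * τ) - ((u : ℂ) * τ, (v : ℂ) * τ) ∈ L) →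
    (∀ z : ℂ × ℂ, B z = (τ / (starRingEnd ℂ) τ) • z) ∧
    (∀ m : ℂ, m ∈ latticeZt τ → (τ / (starRingEnd ℂ) τ) * m ∈ latticeZt τ) ∧
    (t = Real.sqrt 3 / 2 ∨ t = 1 / 2 ∨ t = Real.sqrt 3 / 6) := by
  intro τ L S hSL hSS hfix
  have hτ0 : τ ≠ 0 := by
    intro h
    have := congrArg Complex.im h
    simp [τ] at this
    exact ne_of_gt ht this
  have hcτ0 : (starRingEnd ℂ) τ ≠ 0 := by
    simpa using hτ0
  -- Step 1: determine B on (conj τ, 0) and (0, conj τ)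
  have key1 : B ((starRingEnd ℂ) τ, 0) = (τ, 0) := by
    have h1 : ∀ u : ℝ, (u : ℂ) * ((B ((starRingEnd ℂ) τ, 0)).1 - τ) ∈ latticeZt τ := by
      intro u
      have := hfix u 0
      have hS : S ((u : ℂ) * τ, ((0:ℝ) : ℂ) * τ) = (u : ℂ) • B ((starRingEnd ℂ) τ, 0) := by
        show B _ = _
        rw [← map_smul]
        congr 1
        simp [Prod.ext_iff, map_mul, Complex.conj_ofReal, smul_eq_mul]
      rw [hS] at this
      have := this.1
      simpa [smul_eq_mul, mul_sub] using this
    have h2 : ∀ u : ℝ, (u : ℂ) * (B ((starRingEnd ℂ) τ, 0)).2 ∈ latticeZt τ := by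
      intro u
      have := hfix u 0
      have hS : S ((u : ℂ) * τ, ((0:ℝ) : ℂ) * τ) = (u : ℂ) • B ((starRingEnd ℂ) τ, 0) := by
        show B _ = _
        rw [← map_smul]
        congr 1
        simp [Prod.ext_iff, map_mul, Complex.conj_ofReal, smul_eq_mul]
      rw [hS] at this
      have := this.2
      simpa [smul_eq_mul] using this
    have e1 := lattice_line_zero t ht _ h1
    have e2 := lattice_line_zero t ht _ h2
    ext
    · have := sub_eq_zero.mp e1; simpa using this
    · simpa using e2
  have key2 : B (0, (starRingEnd ℂ) τ) = (0, τ) := by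
    have h1 : ∀ u : ℝ, (u : ℂ) * (B (0, (starRingEnd ℂ) τ)).1 ∈ latticeZt τ := by
      intro u
      have := hfix 0 u
      have hS : S (((0:ℝ) : ℂ) * τ, (u : ℂ) * τ) = (u : ℂ) • B (0, (starRingEnd ℂ) τ) := by
        show B _ = _
        rw [← map_smul]
        congr 1
        simp [Prod.ext_iff, map_mul, Complex.conj_ofReal, smul_eq_mul]
      rw [hS] at this
      have := this.1
      simpa [smul_eq_mul] using this
    have h2 : ∀ u : ℝ, (u : ℂ) * ((B (0, (starRingEnd ℂ) τ)).2 - τ) ∈ latticeZt τ := by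
      intro u
      have := hfix 0 u
      have hS : S (((0:ℝ) : ℂ) * τ, (u : ℂ) * τ) = (u : ℂ) • B (0, (starRingEnd ℂ) τ) := by
        show B _ = _
        rw [← map_smul]
        congr 1
        simp [Prod.ext_iff, map_mul, Complex.conj_ofReal, smul_eq_mul]
      rw [hS] at this
      have := this.2
      simpa [smul_eq_mul, mul_sub] using this
    have e1 := lattice_line_zero t ht _ h1
    have e2 := lattice_line_zero t ht _ h2
    ext
    · simpa using e1
    · have := sub_eq_zero.mp e2; simpa using this
  -- Step 2: B is homothety
  have hB : ∀ z : ℂ × ℂ, B z = (τ / (starRingEnd ℂ) τ) • z := by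
    intro z
    have hz : z = (z.1 / (starRingEnd ℂ) τ) • ((starRingEnd ℂ) τ, 0)
        + (z.2 / (starRingEnd ℂ) τ) • (0, (starRingEnd ℂ) τ) := by
      ext <;> simp [smul_eq_mul] <;> field_simp
    rw [hz, map_add, map_smul, map_smul, key1, key2]
    ext <;> simp [smul_eq_mul] <;> field_simp <;> ring
  refine ⟨hB, ?_⟩
  -- Step 3: lattice is conj-stable
  have hconj : ∀ m ∈ latticeZt τ, (starRingEnd ℂ) m ∈ latticeZt τ := by
    intro m hm
    obtain ⟨a, b, rfl⟩ := mem_latticeZt_iff.mp hm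
    refine mem_latticeZt_iff.mpr ⟨a + b, -b, ?_⟩
    have hcτ : (starRingEnd ℂ) τ = 1 - τ := by
      simp [τ, Complex.ext_iff]; norm_num
    simp only [map_add, map_mul, map_intCast, hcτ]
    push_cast
    ring
  -- Step 4: multiplication by τ/τ̄ preserves the lattice
  have hmul : ∀ m : ℂ, m ∈ latticeZt τ → (τ / (starRingEnd ℂ) τ) * m ∈ latticeZt τ := by
    intro m hm
    have hmem : ((starRingEnd ℂ) m, (0 : ℂ)) ∈ L :=
      ⟨hconj m hm, AddSubgroup.zero_mem _⟩
    have := hSL _ hmem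
    have hSval : S ((starRingEnd ℂ) m, 0) = ((τ / (starRingEnd ℂ) τ) * m, 0) := by
      show B _ = _
      rw [hB]
      simp [Prod.ext_iff, smul_eq_mul, Complex.conj_conj]
    rw [hSval] at this
    exact this.1
  refine ⟨hmul, ?_⟩
  -- Step 5: arithmetic
  have hμ : τ / (starRingEnd ℂ) τ ∈ latticeZt τ := by
    have h1 : (1 : ℂ) ∈ latticeZt τ := AddSubgroup.subset_closure (by simp)
    simpa using hmul 1 h1
  obtain ⟨a, b, hab⟩ := mem_latticeZt_iff.mp hμ
  have hE : τ = ((a : ℂ) + b * τ) * (starRingEnd ℂ) τ := by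
    rw [← hab, div_mul_cancel₀ _ hcτ0]
  have hcτ : (starRingEnd ℂ) τ = Complex.mk (1/2) (-t) := by
    simp [τ, Complex.ext_iff]
  have hτr : τ = ((1/2 : ℝ) : ℂ) + (t:ℂ) * Complex.I := by norm_num [τ]
  have hcτr : (starRingEnd ℂ) τ = ((1/2 : ℝ) : ℂ) - (t:ℂ) * Complex.I := by
    rw [hτr, map_add, map_mul, Complex.conj_ofReal, Complex.conj_ofReal,
      Complex.conj_I]
    ring
  rw [hcτr, hτr] at hE
  rw [Complex.ext_iff] at hE
  obtain ⟨hre, him⟩ := hE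
  simp only [Complex.add_re, Complex.add_im, Complex.mul_re, Complex.mul_im,
    Complex.sub_re, Complex.sub_im, Complex.intCast_re, Complex.intCast_im,
    Complex.ofReal_re, Complex.ofReal_im, Complex.I_re, Complex.I_im] at hre him
  ring_nf at hre him
  have ha : (a : ℝ) = -1 := by nlinarith [him, ht]
  have hbeq : (b : ℝ) * (1 / 4 + t ^ 2) = 1 := by nlinarith [hre, ha]
  exact t_of_b t ht b hbeq
end
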